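/- Let U_n, U:(0,∞)→ℝ be utility functions (strictly increasing, strictly concave, continuously differentiable, satisfying the Inada conditions) such that U_n→U pointwise on (0,∞). Then the conjugate functions converge pointwise: V_n(y)→V(y) for every y∈(0,∞), where V_n(y)=sup_{x>0}(U_n(x)−xy) and V(y)=sup_{x>0}(U(x)−xy). -/

import Mathlib

open MeasureTheory Set Filter
open scoped ENNReal Topology

noncomputable section

namespace TC

variable {Ω : Type*} {m0 : MeasurableSpace Ω}

/-- A càdlàg real path: right-continuous with left limits. -/
def Cadlag (f : ℝ → ℝ) : Prop :=
  (∀ t : ℝ, ContinuousWithinAt f (Ici t) t) ∧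
    ∀ t : ℝ, ∃ L : ℝ, Tendsto f (𝓝[<] t) (𝓝 L)

/-- A làdlàg real path: right limits and left limits exist everywhere. -/
def Ladlag (f : ℝ → ℝ) : Prop :=
  (∀ t : ℝ, ∃ L : ℝ, Tendsto f (𝓝[>] t) (𝓝 L)) ∧
    ∀ t : ℝ, ∃ L : ℝ, Tendsto f (𝓝[<] t) (𝓝 L)

/-- Usual conditions for a filtration: right-continuity and completeness
(the time-0 σ-algebra contains all `μ`-null sets). -/
def UsualConditions (ℱ : Filtration ℝ m0) (μ : Measure Ω) : Prop :=
  (∀ t : ℝ, (ℱ t : MeasurableSpace Ω) = ⨅ s ∈ Ioi t, (ℱ s : MeasurableSpace Ω)) ∧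
    ∀ N : Set Ω, μ N = 0 → MeasurableSet[ℱ 0] N

/-- A `[0,T]`-valued stopping time. -/
def IsStoppingTimeIcc (ℱ : Filtration ℝ m0) (T : ℝ) (τ : Ω → ℝ) : Prop :=
  IsStoppingTime ℱ (fun ω => (τ ω : WithTop ℝ)) ∧ ∀ ω, τ ω ∈ Icc (0 : ℝ) T

/-- A martingale on the time interval `[0,T]`. -/
structure MartingaleOn (ℱ : Filtration ℝ m0) (μ : Measure Ω) (T : ℝ)
    (X : ℝ → Ω → ℝ) : Prop where
  adapted : ∀ t ∈ Icc (0 : ℝ) T, StronglyMeasurable[ℱ t] (X t)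
  integrable : ∀ t ∈ Icc (0 : ℝ) T, Integrable (X t) μ
  condexp_eq : ∀ s t : ℝ, s ∈ Icc (0 : ℝ) T → t ∈ Icc (0 : ℝ) T → s ≤ t →
    μ[X t | ℱ s] =ᵐ[μ] X s

/-- The process `X` stopped at the random time `τ`. -/
def stopped (X : ℝ → Ω → ℝ) (τ : Ω → ℝ) : ℝ → Ω → ℝ := fun t ω => X (min t (τ ω)) ω

/-- A local martingale on `[0,T]`: there is a localizing sequence of stopping times
increasing to infinity reducing `X` to a martingale on `[0,T]`. -/
def IsLocalMartingaleOn (ℱ : Filtration ℝ m0) (μ : Measure Ω) (T : ℝ)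
    (X : ℝ → Ω → ℝ) : Prop :=
  ∃ τ : ℕ → Ω → ℝ,
    (∀ n, IsStoppingTime ℱ (fun ω => (τ n ω : WithTop ℝ))) ∧ (∀ n ω, 0 ≤ τ n ω) ∧
    (∀ n ω, τ n ω ≤ τ (n + 1) ω) ∧
    (∀ ω, ∀ M : ℝ, ∃ N, ∀ n ≥ N, M ≤ τ n ω) ∧
    ∀ n, MartingaleOn ℱ μ T (stopped X (τ n))

/-- An optional strong supermartingale on `[0,T]`: evaluated at any `[0,T]`-valued stopping
time it is measurable for the stopping-time σ-algebra and integrable, and the strong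
supermartingale inequality holds for all pairs of ordered stopping times. -/
structure IsOptionalStrongSupermartingale (ℱ : Filtration ℝ m0) (μ : Measure Ω) (T : ℝ)
    (X : ℝ → Ω → ℝ) : Prop where
  stronglyMeasurable : ∀ ⦃τ : Ω → ℝ⦄ (hτ : IsStoppingTimeIcc ℱ T τ),
    StronglyMeasurable[hτ.1.measurableSpace] fun ω => X (τ ω) ω
  integrable : ∀ ⦃τ : Ω → ℝ⦄, IsStoppingTimeIcc ℱ T τ →
    Integrable (fun ω => X (τ ω) ω) μ
  supermartingale : ∀ ⦃σ τ : Ω → ℝ⦄ (hσ : IsStoppingTimeIcc ℱ T σ),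
    IsStoppingTimeIcc ℱ T τ → (∀ ω, σ ω ≤ τ ω) →
    μ[fun ω => X (τ ω) ω | hσ.1.measurableSpace] ≤ᵐ[μ] fun ω => X (σ ω) ω

/-- The liquidation value of the position `φ = (φ⁰, φ¹)` at time `t` under
proportional transaction costs `c`. -/
def liqValue (S : ℝ → Ω → ℝ) (c : ℝ) (φ : (ℝ → Ω → ℝ) × (ℝ → Ω → ℝ)) (t : ℝ) (ω : Ω) : ℝ :=
  φ.1 t ω + (1 - c) * max (φ.2 t ω) 0 * S t ω - max (-(φ.2 t ω)) 0 * S t ω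

/-- A self-financing trading strategy under transaction costs `c`: an adapted,
finite-variation (làdlàg) pair `(φ⁰, φ¹)` such that, writing `φ¹ = up - down` as a
difference of nondecreasing processes, the increments of `φ⁰` are dominated by the
Lebesgue--Stieltjes integrals `-∫ S d(up) + (1-c) ∫ S d(down)`. -/
def SelfFinancing (ℱ : Filtration ℝ m0) (T : ℝ) (S : ℝ → Ω → ℝ) (c : ℝ)
    (φ : (ℝ → Ω → ℝ) × (ℝ → Ω → ℝ)) : Prop :=
  Adapted ℱ φ.1 ∧ Adapted ℱ φ.2 ∧
  (∀ ω, Ladlag fun t => φ.1 t ω) ∧ (∀ ω, Ladlag fun t => φ.2 t ω) ∧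
  ∃ (up down : Ω → ℝ → ℝ) (hup : ∀ ω, Monotone (up ω)) (hdown : ∀ ω, Monotone (down ω)),
    (∀ ω t, φ.2 t ω = up ω t - down ω t) ∧
    ∀ ω, ∀ s t : ℝ, 0 ≤ s → s < t → t ≤ T →
      φ.1 t ω - φ.1 s ω ≤
        -(∫ u in Ioc s t, S u ω ∂((hup ω).stieltjesFunction.measure)) +
          (1 - c) * ∫ u in Ioc s t, S u ω ∂((hdown ω).stieltjesFunction.measure)

/-- Admissibility: the liquidation value stays nonnegative on `[0,T]`. -/
def Admissible (T : ℝ) (S : ℝ → Ω → ℝ) (c : ℝ)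
    (φ : (ℝ → Ω → ℝ) × (ℝ → Ω → ℝ)) : Prop :=
  ∀ t ∈ Icc (0 : ℝ) T, ∀ ω, 0 ≤ liqValue S c φ t ω

/-- The set `A(x)` of admissible self-financing strategies starting from `(x, 0)`. -/
def A (ℱ : Filtration ℝ m0) (T : ℝ) (S : ℝ → Ω → ℝ) (c : ℝ) (x : ℝ) :
    Set ((ℝ → Ω → ℝ) × (ℝ → Ω → ℝ)) :=
  {φ | SelfFinancing ℱ T S c φ ∧ Admissible T S c φ ∧ ∀ ω, φ.1 0 ω = x ∧ φ.2 0 ω = 0}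

/-- The set `C(x)` of attainable terminal liquidation values from initial wealth `x`. -/
def C (ℱ : Filtration ℝ m0) (T : ℝ) (S : ℝ → Ω → ℝ) (c : ℝ) (x : ℝ) : Set (Ω → ℝ) :=
  {g | ∃ φ ∈ A ℱ T S c x, g = fun ω => liqValue S c φ T ω}

/-- The set `B(y)` of optional strong supermartingale deflators under the measure `μ`. -/
def B (ℱ : Filtration ℝ m0) (μ : Measure Ω) (T : ℝ) (S : ℝ → Ω → ℝ) (c : ℝ) (y : ℝ) :
    Set ((ℝ → Ω → ℝ) × (ℝ → Ω → ℝ)) :=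
  {Y | IsOptionalStrongSupermartingale ℱ μ T Y.1 ∧
    IsOptionalStrongSupermartingale ℱ μ T Y.2 ∧
    (∀ t ω, 0 ≤ Y.1 t ω) ∧ (∀ t ω, 0 ≤ Y.2 t ω) ∧ (∀ ω, Y.1 0 ω = y) ∧
    (∃ St : ℝ → Ω → ℝ,
      (∀ t ∈ Icc (0 : ℝ) T, ∀ ω, St t ω ∈ Icc ((1 - c) * S t ω) (S t ω)) ∧
      ∀ t ω, Y.2 t ω = Y.1 t ω * St t ω) ∧
    ∀ φ ∈ A ℱ T S c 1,
      IsOptionalStrongSupermartingale ℱ μ T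
        (fun t ω => φ.1 t ω * Y.1 t ω + φ.2 t ω * Y.2 t ω) ∧
      ∀ t ∈ Icc (0 : ℝ) T, ∀ ω, 0 ≤ φ.1 t ω * Y.1 t ω + φ.2 t ω * Y.2 t ω}

/-- The set `D(y)` of terminal values of deflators in `B(y)`. -/
def D (ℱ : Filtration ℝ m0) (μ : Measure Ω) (T : ℝ) (S : ℝ → Ω → ℝ) (c : ℝ) (y : ℝ) :
    Set (Ω → ℝ) :=
  {h | ∃ Y ∈ B ℱ μ T S c y, h = Y.1 T}

/-- A `c`-consistent price system under the measure `μ` for the price `S`. -/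
def IsCPS (ℱ : Filtration ℝ m0) (μ : Measure Ω) (T : ℝ) (S : ℝ → Ω → ℝ) (c : ℝ)
    (Z : (ℝ → Ω → ℝ) × (ℝ → Ω → ℝ)) : Prop :=
  (∀ t ∈ Icc (0 : ℝ) T, ∀ ω, 0 < Z.1 t ω) ∧ (∀ t ∈ Icc (0 : ℝ) T, ∀ ω, 0 < Z.2 t ω) ∧
  (∀ ω, Z.1 0 ω = 1) ∧ MartingaleOn ℱ μ T Z.1 ∧ IsLocalMartingaleOn ℱ μ T Z.2 ∧
  ∀ t ∈ Icc (0 : ℝ) T, ∀ ω, Z.2 t ω / Z.1 t ω ∈ Icc ((1 - c) * S t ω) (S t ω)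

/-- The set `Z^{loc,c}(μ)` of local `c`-consistent price systems under `μ`. -/
def Zloc (ℱ : Filtration ℝ m0) (μ : Measure Ω) (T : ℝ) (S : ℝ → Ω → ℝ) (c : ℝ) :
    Set ((ℝ → Ω → ℝ) × (ℝ → Ω → ℝ)) :=
  {Z | (∀ t ∈ Icc (0 : ℝ) T, ∀ ω, 0 < Z.1 t ω ∧ 0 < Z.2 t ω) ∧ (∀ ω, Z.1 0 ω = 1) ∧
    ∃ τ : ℕ → Ω → ℝ,
      (∀ n, IsStoppingTime ℱ (fun ω => (τ n ω : WithTop ℝ))) ∧ (∀ n ω, 0 ≤ τ n ω) ∧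
      (∀ n ω, τ n ω ≤ τ (n + 1) ω) ∧
      (∀ ω, ∀ M : ℝ, ∃ N, ∀ n ≥ N, M ≤ τ n ω) ∧
      ∀ n, IsCPS ℱ μ T (stopped S (τ n)) c (stopped Z.1 (τ n), stopped Z.2 (τ n))}

/-- A utility function on `(0,∞)`: strictly increasing, strictly concave, continuously
differentiable, satisfying the Inada conditions. -/
structure IsUtility (U : ℝ → ℝ) : Prop where
  strictMono : StrictMonoOn U (Ioi 0)
  strictConcave : StrictConcaveOn ℝ (Ioi 0) U
  differentiable : ∀ x ∈ Ioi (0 : ℝ), DifferentiableAt ℝ U x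
  contDeriv : ContinuousOn (deriv U) (Ioi 0)
  inada_zero : Tendsto (deriv U) (𝓝[>] 0) atTop
  inada_top : Tendsto (deriv U) atTop (𝓝 0)

/-- Reasonable asymptotic elasticity: `limsup_{x→∞} x U'(x)/U(x) < 1`. -/
def ReasonableAE (U : ℝ → ℝ) : Prop :=
  limsup (fun x => x * deriv U x / U x) atTop < 1

/-- The Legendre--Fenchel conjugate `V(y) = sup_{x>0} (U(x) - x y)`. -/
def conjFn (U : ℝ → ℝ) (y : ℝ) : ℝ := ⨆ x : Ioi (0 : ℝ), (U x.1 - x.1 * y)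

/-- The primal value function `u(x) = sup_{g ∈ C(x)} E_μ[U(g)]`. -/
def primalValue (ℱ : Filtration ℝ m0) (μ : Measure Ω) (T : ℝ) (S : ℝ → Ω → ℝ) (c : ℝ)
    (U : ℝ → ℝ) (x : ℝ) : ℝ :=
  sSup ((fun g => ∫ ω, U (g ω) ∂μ) '' C ℱ T S c x)

/-- The dual value function `v(y) = inf_{h ∈ D(y)} E_μ[V(h)]`. -/
def dualValue (ℱ : Filtration ℝ m0) (μ : Measure Ω) (T : ℝ) (S : ℝ → Ω → ℝ) (c : ℝ)
    (V : ℝ → ℝ) (y : ℝ) : ℝ :=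
  sInf ((fun h => ∫ ω, V (h ω) ∂μ) '' D ℱ μ T S c y)

/-- The standing assumptions of the duality theorem. -/
structure StandingAssumptions (ℱ : Filtration ℝ m0) (μ : Measure Ω) (T : ℝ)
    (S : ℝ → Ω → ℝ) (c : ℝ) (U : ℝ → ℝ) : Prop where
  hT : 0 < T
  hc : c ∈ Ioo (0 : ℝ) 1
  usual : UsualConditions ℱ μ
  S_adapted : Adapted ℱ S
  S_pos : ∀ t ω, 0 < S t ω
  S_cadlag : ∀ ω, Cadlag fun t => S t ω
  hU : IsUtility U
  hRAE : ReasonableAE U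
  finiteValue : ∃ x > 0, BddAbove ((fun g => ∫ ω, U (g ω) ∂μ) '' C ℱ T S c x)
  cps : ∀ m : ℝ, 0 < m → m < c → (Zloc ℱ μ T S m).Nonempty

/-- A Doob--Meyer--Mertens decomposition `X = M - A` on `[0,T]`: `M` a càdlàg local
martingale, `A` a nondecreasing làdlàg adapted (predictable) process starting at `0`. -/
structure IsDMMDecomposition (ℱ : Filtration ℝ m0) (μ : Measure Ω) (T : ℝ)
    (X M A : ℝ → Ω → ℝ) : Prop where
  decomp : ∀ t ∈ Icc (0 : ℝ) T, ∀ ω, X t ω = M t ω - A t ω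
  localMart : IsLocalMartingaleOn ℱ μ T M
  M_cadlag : ∀ ω, Cadlag fun t => M t ω
  A_adapted : Adapted ℱ A
  A_mono : ∀ ω, MonotoneOn (fun t => A t ω) (Icc 0 T)
  A_zero : ∀ ω, A 0 ω = 0
  A_ladlag : ∀ ω, Ladlag fun t => A t ω

/-- The first time after `σ` at which `S` hits `(1+ε) S_σ` or `(1-ε) S_σ`, capped at `T`. -/
def hittingTimeEps (S : ℝ → Ω → ℝ) (T : ℝ) (σ : Ω → ℝ) (ε : ℝ) (ω : Ω) : ℝ :=
  sInf ({t : ℝ | σ ω ≤ t ∧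
    (S t ω = (1 + ε) * S (σ ω) ω ∨ S t ω = (1 - ε) * S (σ ω) ω)} ∪ {T})

variable {W : ℝ → ℝ}

lemma utility_slope_anti (hW : IsUtility W) {p q r : ℝ} (hp : 0 < p) (hpq : p < q)
    (hqr : q < r) : (W r - W q) / (r - q) ≤ (W q - W p) / (q - p) :=
  hW.strictConcave.concaveOn.slope_anti_adjacent hp (hp.trans (hpq.trans hqr)) hpq hqr

lemma utility_slope_nonneg (hW : IsUtility W) {p q : ℝ} (hp : 0 < p) (hpq : p < q) :
    0 ≤ (W q - W p) / (q - p) :=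
  div_nonneg (sub_nonneg.2 (hW.strictMono hp (hp.trans hpq) hpq).le) (by linarith)

lemma utility_lip (hW : IsUtility W) {a x1 x2 : ℝ} (ha : 0 < a) (h1 : a ≤ x1)
    (h2 : x1 ≤ x2) : W x2 - W x1 ≤ (W a - W (a / 2)) / (a - a / 2) * (x2 - x1) := by
  have ha2 : (0:ℝ) < a / 2 := by linarith
  have ha2a : a / 2 < a := by linarith
  rcases eq_or_lt_of_le h2 with rfl | h12
  · have := utility_slope_nonneg hW ha2 ha2a
    nlinarith
  · have key : (W x2 - W x1) / (x2 - x1) ≤ (W a - W (a/2)) / (a - a/2) := by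
      rcases eq_or_lt_of_le h1 with rfl | hax1
      · exact utility_slope_anti hW ha2 ha2a h12
      · exact le_trans (utility_slope_anti hW ha hax1 h12)
          (utility_slope_anti hW ha2 ha2a hax1)
    have hx : (0:ℝ) < x2 - x1 := by linarith
    calc W x2 - W x1 = (W x2 - W x1) / (x2 - x1) * (x2 - x1) := by field_simp
    _ ≤ (W a - W (a/2)) / (a - a/2) * (x2 - x1) :=
        mul_le_mul_of_nonneg_right key hx.le

lemma exists_small_slope (hW : IsUtility W) {y : ℝ} (hy : 0 < y) (N : ℝ) :
    ∃ b, N < b ∧ 1 ≤ b ∧ W (b + 1) - W b < y := by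
  obtain ⟨B, hB⟩ := (Filter.eventually_atTop).1 (hW.inada_top.eventually_lt_const hy)
  refine ⟨max B (max N 1) + 1, ?_, ?_, ?_⟩
  · have := le_max_left N 1; have := le_max_right B (max N 1); linarith
  · have := le_max_right N 1; have := le_max_right B (max N 1); linarith
  · set b := max B (max N 1) + 1 with hb
    have hb1 : (1:ℝ) ≤ b := by
      have := le_max_right N 1; have := le_max_right B (max N 1); simp only [hb]; linarith
    have hb0 : (0:ℝ) < b := by linarith
    have hsub : Icc b (b+1) ⊆ Ioi (0:ℝ) := fun x hx => lt_of_lt_of_le hb0 hx.1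
    have hcont : ContinuousOn W (Icc b (b+1)) := fun x hx =>
      ((hW.differentiable x (hsub hx)).continuousAt).continuousWithinAt
    have hdiff : DifferentiableOn ℝ W (Ioo b (b+1)) := fun x hx =>
      (hW.differentiable x (hsub (Ioo_subset_Icc_self hx))).differentiableWithinAt
    obtain ⟨c, hc, hceq⟩ := exists_deriv_eq_slope W (by linarith : b < b + 1) hcont hdiff
    have hcB : B ≤ c := by
      have := le_max_left B (max N 1); have := hc.1; simp only [hb] at this ⊢; linarith
    have := hB c hcB
    rw [hceq] at this
    have h1 : b + 1 - b = (1:ℝ) := by ring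
    rw [h1, div_one] at this
    exact this

lemma tail_bound (hW : IsUtility W) {y a b : ℝ} (ha : 0 < a) (hab : a < b)
    (hs : (W b - W a) / (b - a) ≤ y) {x : ℝ} (hx : b ≤ x) :
    W x - x * y ≤ W b - b * y := by
  rcases eq_or_lt_of_le hx with rfl | hbx
  · exact le_rfl
  · have key : (W x - W b) / (x - b) ≤ (W b - W a) / (b - a) :=
      utility_slope_anti hW ha hab hbx
    have hxb : (0:ℝ) < x - b := by linarith
    have : W x - W b ≤ y * (x - b) := by
      have := (div_le_iff₀ hxb).1 (key.trans hs)
      linarith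
    nlinarith

lemma utility_bdd (hW : IsUtility W) {y : ℝ} (hy : 0 < y) :
    BddAbove (Set.range fun x : Ioi (0:ℝ) => W x.1 - x.1 * y) := by
  obtain ⟨b, _, hb1, hslope⟩ := exists_small_slope hW hy 0
  refine ⟨W (b + 1), Set.forall_mem_range.2 fun x => ?_⟩
  have hx0 : (0:ℝ) < x.1 := x.2
  have hb0 : (0:ℝ) < b := by linarith
  have hs : (W (b+1) - W b) / ((b+1) - b) ≤ y := by
    have h1 : (b+1) - b = (1:ℝ) := by ring
    rw [h1, div_one]; exact hslope.le
  rcases le_or_gt x.1 (b+1) with h | h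
  · have : W x.1 ≤ W (b+1) :=
      hW.strictMono.monotoneOn hx0 (Set.mem_Ioi.2 (by linarith)) h
    nlinarith
  · have := tail_bound hW hb0 (by linarith : b < b + 1) hs h.le
    nlinarith



set_option maxHeartbeats 1000000 in
/-- **Pointwise convergence of conjugates**: if the utility functions `Uₙ` converge
pointwise on `(0,∞)` to the utility function `U`, then the Legendre--Fenchel conjugates
converge pointwise: `Vₙ(y) → V(y)` for every `y > 0`. -/
theorem conjFn_pointwise_convergence
    (U : ℝ → ℝ) (Un : ℕ → ℝ → ℝ) (hU : IsUtility U) (hUn : ∀ n, IsUtility (Un n))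
    (hUconv : ∀ z > (0 : ℝ), Tendsto (fun n => Un n z) atTop (𝓝 (U z))) :
    ∀ y > (0 : ℝ), Tendsto (fun n => conjFn (Un n) y) atTop (𝓝 (conjFn U y)) := by
  intro y hy
  haveI : Nonempty (Ioi (0:ℝ)) := ⟨⟨1, Set.mem_Ioi.2 one_pos⟩⟩
  set V := conjFn U y with hV
  rw [Metric.tendsto_atTop]
  intro ε hε
  rw [← Filter.eventually_atTop]
  -- choose parameters
  have hy2 : 0 < y / 2 := by linarith
  set a : ℝ := min 1 (ε / (2 * y)) with ha_def
  have ha0 : 0 < a := lt_min one_pos (by positivity)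
  have hay : a * y ≤ ε / 2 := by
    have : a ≤ ε / (2 * y) := min_le_right _ _
    calc a * y ≤ ε / (2 * y) * y := mul_le_mul_of_nonneg_right this hy.le
    _ = ε / 2 := by field_simp
  obtain ⟨b, hab', hb1, hbslope⟩ := exists_small_slope hU hy2 (max a 1)
  have hb0 : (0:ℝ) < b := by linarith
  set B : ℝ := b + 1 with hB_def
  have haB : a < B := by
    have := le_max_left a 1; linarith
  have haB' : a ≤ B := haB.le
  set L : ℝ := (U a - U (a/2)) / (a - a/2) with hL_def
  have hL0 : 0 ≤ L := utility_slope_nonneg hU (by linarith) (by linarith)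
  set K : ℝ := L + 1 with hK_def
  have hK0 : (0:ℝ) < K := by linarith
  set δ : ℝ := min 1 (ε / (4 * K)) with hδ_def
  have hδ0 : 0 < δ := lt_min one_pos (by positivity)
  have hKδ : K * δ ≤ ε / 4 := by
    have h1 : δ ≤ ε / (4 * K) := min_le_right _ _
    calc K * δ ≤ K * (ε / (4 * K)) := mul_le_mul_of_nonneg_left h1 hK0.le
    _ = ε / 4 := by field_simp
  set m : ℕ := ⌈(B - a) / δ⌉₊ with hm_def
  have hnetpos : ∀ i : ℕ, (0:ℝ) < a + i * δ := fun i => by positivity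
  -- the value at each net point is at most V
  have hnetle : ∀ i : ℕ, U (a + i * δ) - (a + i * δ) * y ≤ V := fun i =>
    le_ciSup (utility_bdd hU hy) (⟨a + i * δ, hnetpos i⟩ : Ioi (0:ℝ))
  -- eventual facts
  have E1 : ∀ᶠ n in atTop, ∀ i ∈ Finset.range (m + 1),
      Un n (a + i * δ) - (a + i * δ) * y < V + ε / 4 := by
    rw [Filter.eventually_all_finset]
    intro i _
    have hconv : Tendsto (fun n => Un n (a + i * δ) - (a + i * δ) * y) atTop
        (𝓝 (U (a + i * δ) - (a + i * δ) * y)) :=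
      (hUconv _ (hnetpos i)).sub_const _
    exact hconv.eventually_lt_const (by have := hnetle i; linarith)
  have E2 : ∀ᶠ n in atTop, Un n B - Un n b < y := by
    have hconv : Tendsto (fun n => Un n B - Un n b) atTop (𝓝 (U B - U b)) :=
      (hUconv B (by linarith)).sub (hUconv b hb0)
    exact hconv.eventually_lt_const (by linarith)
  have E3 : ∀ᶠ n in atTop, (Un n a - Un n (a/2)) / (a - a/2) ≤ K := by
    have hconv : Tendsto (fun n => (Un n a - Un n (a/2)) / (a - a/2)) atTop (𝓝 L) := by
      rw [hL_def]
      exact ((hUconv a ha0).sub (hUconv (a/2) (by linarith))).div_const _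
    filter_upwards [hconv.eventually_lt_const (by linarith : L < K)] with n hn
    exact hn.le
  -- eventual lower bound
  have hlow : ∀ᶠ n in atTop, V - ε / 2 < conjFn (Un n) y := by
    have hVlt : V - ε / 2 < ⨆ x : Ioi (0:ℝ), (U x.1 - x.1 * y) := by
      rw [hV, conjFn]; linarith
    obtain ⟨x0, hx0⟩ := exists_lt_of_lt_ciSup hVlt
    have hconv : Tendsto (fun n => Un n x0.1 - x0.1 * y) atTop (𝓝 (U x0.1 - x0.1 * y)) :=
      (hUconv x0.1 x0.2).sub_const _
    filter_upwards [hconv.eventually_const_lt hx0] with n hn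
    exact hn.trans_le (le_ciSup (utility_bdd (hUn n) hy) x0)
  clear_value V a B L K δ m
  filter_upwards [hlow, E1, E2, E3] with n h1 h2 h3 h4
  -- upper bound for this n
  have hmid : ∀ x : ℝ, a ≤ x → x ≤ B → Un n x - x * y ≤ V + ε / 2 := by
    intro x hax hxB
    set i : ℕ := ⌊(x - a) / δ⌋₊ with hi_def
    have him : i ∈ Finset.range (m + 1) := by
      rw [Finset.mem_range, Nat.lt_succ_iff, hi_def, hm_def]
      exact le_trans (Nat.floor_le_ceil _) (Nat.ceil_le_ceil (by gcongr))
    set p : ℝ := a + i * δ with hp_def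
    have hpa : a ≤ p := by
      have : (0:ℝ) ≤ i * δ := by positivity
      linarith
    have hpx : p ≤ x := by
      have h1 : (i:ℝ) ≤ (x - a) / δ := Nat.floor_le (div_nonneg (by linarith) hδ0.le)
      have h2 : (i:ℝ) * δ ≤ x - a := by
        have := mul_le_mul_of_nonneg_right h1 hδ0.le
        rwa [div_mul_cancel₀ _ hδ0.ne'] at this
      linarith
    have hxp : x - p ≤ δ := by
      have h1 : (x - a) / δ < i + 1 := Nat.lt_floor_add_one _
      have h2 : x - a < ((i:ℝ) + 1) * δ := by
        have := (div_lt_iff₀ hδ0).1 h1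
        linarith
      have : p = a + i * δ := hp_def
      nlinarith
    clear_value i p
    have hlipn := utility_lip (hUn n) ha0 hpa hpx
    have hLn : (Un n a - Un n (a/2)) / (a - a/2) * (x - p) ≤ K * δ :=
      mul_le_mul h4 hxp (by linarith) hK0.le
    have hfp : Un n p - p * y < V + ε / 4 := by
      have := h2 i him
      rw [← hp_def] at this
      exact this
    have hxpy : 0 ≤ (x - p) * y := mul_nonneg (by linarith) hy.le
    have hexp : (x - p) * y = x * y - p * y := by ring
    linarith only [hlipn, hLn, hKδ, hfp, hxpy, hexp]
  have hupper : conjFn (Un n) y ≤ V + 3 * ε / 4 := by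
    rw [conjFn]
    apply ciSup_le
    rintro ⟨x, hx⟩
    simp only
    have hx0 : (0:ℝ) < x := hx
    rcases le_or_gt x a with hxa | hxa
    · have hUx : Un n x ≤ Un n a :=
        (hUn n).strictMono.monotoneOn hx0 (Set.mem_Ioi.2 ha0) hxa
      have hfa : Un n a - a * y < V + ε / 4 := by
        have := h2 0 (Finset.mem_range.2 (Nat.succ_pos m))
        simpa using this
      have hxy0 : 0 ≤ x * y := mul_nonneg hx0.le hy.le
      linarith only [hUx, hfa, hay, hxy0, hε]
    rcases le_or_gt x B with hxB | hxB
    · have := hmid x hxa.le hxB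
      linarith only [this, hε]
    · have hs : (Un n B - Un n b) / (B - b) ≤ y := by
        have hden : B - b = (1:ℝ) := by rw [hB_def]; ring
        rw [hden, div_one]
        exact h3.le
      have htail := tail_bound (hUn n) hb0 (by rw [hB_def]; linarith) hs hxB.le
      have := hmid B haB' le_rfl
      linarith only [htail, this, hε]
  rw [Real.dist_eq, abs_lt]
  constructor
  · linarith only [h1, hε]
  · linarith only [hupper, hε]


end TC
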